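/- For the type-III piecewise fractional kernel h₃ with parameters κ > 0 and d ∈ (1/2,1), the tail integral H₃(x) := ∫₀ˣ h₃(v) dv equals x^d/Γ(d+1) if x < (1−d)/κ, and equals ((1−d)/κ)^d (1 − d e^{1−d−κx})/((1−d)Γ(d+1)) if x ≥ (1−d)/κ. -/

import Mathlib

open MeasureTheory Real Set

/-- The type-III piecewise fractional kernel. -/
noncomputable def h3 (κ d v : ℝ) : ℝ :=
  if v < (1 - d) / κ then
    (v ^ (d - 1) - ((1 - d) / κ) ^ (d - 1)) / Real.Gamma d
      - κ ^ (1 - d) / ((1 - d) ^ (2 - d) * Real.Gamma (d - 1))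
  else
    -(Real.exp (1 - d - κ * v) * ((1 - d) / κ) ^ (d - 1)) / ((1 - d) * Real.Gamma (d - 1))

/-- The tail integral H₃(x) = ∫₀ˣ h₃(v) dv of the type-III kernel. -/
theorem stmt3 (κ d : ℝ) (hκ : 0 < κ) (hd : d ∈ Set.Ioo (1/2 : ℝ) 1) (x : ℝ) (hx : 0 < x) :
    ∫ v in (0:ℝ)..x, h3 κ d v
      = if x < (1 - d) / κ then x ^ d / Real.Gamma (d + 1)
        else ((1 - d) / κ) ^ d * (1 - d * Real.exp (1 - d - κ * x))
          / ((1 - d) * Real.Gamma (d + 1)) := by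
  obtain ⟨hd1, hd2⟩ := hd
  have hdpos : 0 < d := by linarith
  have h1d : 0 < 1 - d := by linarith
  set c : ℝ := (1 - d) / κ with hc
  have hcpos : 0 < c := div_pos h1d hκ
  have hG1 : Real.Gamma (d - 1) ≠ 0 := by
    apply Real.Gamma_ne_zero
    intro n
    cases n with
    | zero => push_cast; intro h; linarith
    | succ m =>
      push_cast
      have : (0:ℝ) ≤ m := Nat.cast_nonneg m
      intro h; linarith
  have hd1ne : d - 1 ≠ 0 := by intro h; linarith
  have hGd : Real.Gamma d = (d - 1) * Real.Gamma (d - 1) := by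
    have := Real.Gamma_add_one hd1ne
    simpa using this
  have hGdne : Real.Gamma d ≠ 0 := by
    rw [hGd]; exact mul_ne_zero hd1ne hG1
  have hGd1 : Real.Gamma (d + 1) = d * Real.Gamma d := Real.Gamma_add_one hdpos.ne'
  have hGd1ne : Real.Gamma (d + 1) ≠ 0 := by
    rw [hGd1]; exact mul_ne_zero hdpos.ne' hGdne
  -- key rpow identities
  have e1 : c ^ (d - 1) = (1 - d) ^ (d - 1) * κ ^ (1 - d) := by
    rw [hc, Real.div_rpow h1d.le hκ.le, div_eq_mul_inv, ← Real.rpow_neg hκ.le,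
      show -(d - 1) = 1 - d by ring]
  have e2 : (1 - d) ^ (2 - d) * (1 - d) ^ (d - 1) = 1 - d := by
    rw [← Real.rpow_add h1d, show (2 - d) + (d - 1) = 1 by ring, Real.rpow_one]
  have h2dne : (1 - d) ^ (2 - d) ≠ 0 := (Real.rpow_pos_of_pos h1d _).ne'
  -- the key cancellation
  have key : c ^ (d - 1) / Real.Gamma d
      + κ ^ (1 - d) / ((1 - d) ^ (2 - d) * Real.Gamma (d - 1)) = 0 := by
    rw [e1, hGd]
    field_simp
    linear_combination κ ^ (1 - d) * e2
  -- simplification of h3 on the first branch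
  have h3eq : ∀ v : ℝ, v < c → h3 κ d v = v ^ (d - 1) / Real.Gamma d := by
    intro v hv
    rw [h3, if_pos hv]
    have := key
    rw [← hc] at *
    linarith [key, sub_div (v ^ (d - 1)) (c ^ (d - 1)) (Real.Gamma d)]
  -- antiderivative on the second branch
  have hF : ∀ v : ℝ, HasDerivAt
      (fun v => Real.exp (1 - d - κ * v) * c ^ (d - 1) / (κ * (1 - d) * Real.Gamma (d - 1)))
      (-(Real.exp (1 - d - κ * v) * c ^ (d - 1)) / ((1 - d) * Real.Gamma (d - 1))) v := by
    intro v
    have hlin : HasDerivAt (fun v : ℝ => 1 - d - κ * v) (-κ) v := by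
      simpa using (((hasDerivAt_id' v).const_mul κ).const_sub (1 - d))
    have h2 := (Real.hasDerivAt_exp (1 - d - κ * v)).comp v hlin
    have h3' := (h2.mul_const (c ^ (d - 1))).div_const (κ * (1 - d) * Real.Gamma (d - 1))
    refine h3'.congr_deriv ?_
    field_simp
  have hbranch2 : ∀ v : ℝ, c ≤ v →
      h3 κ d v = -(Real.exp (1 - d - κ * v) * c ^ (d - 1)) / ((1 - d) * Real.Gamma (d - 1)) := by
    intro v hv
    rw [h3, if_neg (not_lt.mpr hv), ← hc]
  by_cases hxc : x < c
  · rw [if_pos hxc]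
    rw [intervalIntegral.integral_congr (g := fun v => v ^ (d - 1) / Real.Gamma d)
      (fun v hv => by
        rw [Set.uIcc_of_le hx.le] at hv
        exact h3eq v (lt_of_le_of_lt hv.2 hxc))]
    rw [intervalIntegral.integral_div, integral_rpow (Or.inl (by linarith))]
    rw [show d - 1 + 1 = d by ring, Real.zero_rpow hdpos.ne', hGd1]
    field_simp
    simp
  · push_neg at hxc
    rw [if_neg (not_lt.mpr hxc)]
    -- integrability on [0, c]
    have hint_rpow : IntervalIntegrable (fun v : ℝ => v ^ (d - 1) / Real.Gamma d) volume 0 c :=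
      (intervalIntegral.intervalIntegrable_rpow' (by linarith)).div_const _
    have hae : ∀ᵐ v ∂(volume : Measure ℝ), v ≠ c := by
      rw [MeasureTheory.ae_iff]
      have : {v : ℝ | ¬v ≠ c} = {c} := by ext v; simp
      rw [this]
      exact Real.volume_singleton
    have haeIoc : ∀ᵐ v ∂(volume : Measure ℝ), v ∈ Set.uIoc (0:ℝ) c →
        h3 κ d v = v ^ (d - 1) / Real.Gamma d := by
      filter_upwards [hae] with v hv hvmem
      rw [Set.uIoc_of_le hcpos.le] at hvmem
      exact h3eq v (lt_of_le_of_ne hvmem.2 hv)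
    have hint1 : IntervalIntegrable (h3 κ d) volume 0 c := by
      refine hint_rpow.congr_ae ?_
      exact (MeasureTheory.ae_restrict_iff' measurableSet_uIoc).mpr
        (by filter_upwards [haeIoc] with v hv hvmem; exact (hv hvmem).symm)
    have hcontF : ContinuousOn
        (fun v => -(Real.exp (1 - d - κ * v) * c ^ (d - 1)) / ((1 - d) * Real.Gamma (d - 1)))
        (Set.uIcc c x) := by
      fun_prop
    have hint2 : IntervalIntegrable (h3 κ d) volume c x := by
      refine (hcontF.congr ?_).intervalIntegrable
      intro v hv
      rw [Set.uIcc_of_le hxc] at hv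
      exact hbranch2 v hv.1
    rw [← intervalIntegral.integral_add_adjacent_intervals hint1 hint2]
    have I1 : ∫ v in (0:ℝ)..c, h3 κ d v = c ^ d / Real.Gamma (d + 1) := by
      rw [intervalIntegral.integral_congr_ae haeIoc]
      rw [intervalIntegral.integral_div, integral_rpow (Or.inl (by linarith))]
      rw [show d - 1 + 1 = d by ring, Real.zero_rpow hdpos.ne', hGd1]
      field_simp
      simp
    have I2 : ∫ v in c..x, h3 κ d v
        = Real.exp (1 - d - κ * x) * c ^ (d - 1) / (κ * (1 - d) * Real.Gamma (d - 1))
          - Real.exp (1 - d - κ * c) * c ^ (d - 1) / (κ * (1 - d) * Real.Gamma (d - 1)) := by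
      rw [intervalIntegral.integral_congr (g := fun v =>
          -(Real.exp (1 - d - κ * v) * c ^ (d - 1)) / ((1 - d) * Real.Gamma (d - 1)))
        (fun v hv => by
          rw [Set.uIcc_of_le hxc] at hv
          exact hbranch2 v hv.1)]
      exact intervalIntegral.integral_eq_sub_of_hasDerivAt (fun v _ => hF v)
        (hcontF.intervalIntegrable)
    rw [I1, I2]
    have hκc : κ * c = 1 - d := by
      rw [hc]; field_simp
    have hexpc : Real.exp (1 - d - κ * c) = 1 := by
      rw [hκc]; simp
    have hcd : c ^ d = c ^ (d - 1) * c := by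
      rw [← Real.rpow_add_one hcpos.ne' (d - 1), show d - 1 + 1 = d by ring]
    rw [hexpc, hcd, hGd1, hGd]
    have h1 : c = (1 - d) / κ := hc
    rw [h1]
    field_simp
    ring
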